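/- arXiv:2005.13715 — 3 statements merged into one kernel-verified Lean document; each statement's English description precedes it below -/
import Mathlib

section
/- Suppose the weight w is a positive integer multiple of the Hamming weight, i.e., there is an integer λ ≥ 1 with w(a) = λ for every nonzero a ∈ 𝔽_q. Then a code C ⊆ 𝔽_q^n with |C| ≥ 2 is diameter perfect if and only if C is MDS. -/
set_option linter.unusedSectionVars false

open scoped Classical

noncomputable section

variable {F : Type*} [Field F] [Fintype F]

def IsWeight (w : F → ℕ) : Prop :=
  (∀ a : F, w a = 0 ↔ a = 0) ∧ (∀ a : F, w (-a) = w a) ∧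
    (∀ a b : F, w (a + b) ≤ w a + w b)

def Mw (w : F → ℕ) : ℕ := Finset.univ.sup w

def mw (w : F → ℕ) : ℕ := sInf {s | ∃ a : F, a ≠ 0 ∧ w a = s}

def rho {n : ℕ} (u : Fin n → F) : ℕ :=
  (Finset.univ.filter fun j => u j ≠ 0).sup fun j => (j : ℕ) + 1

lemma rho_le {n : ℕ} (u : Fin n → F) : rho u ≤ n :=
  Finset.sup_le fun j _ => j.isLt

def chainWeight {n : ℕ} (w : F → ℕ) (u : Fin n → F) : ℕ :=
  if h : rho u = 0 then 0
  else w (u ⟨rho u - 1,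
        lt_of_lt_of_le (Nat.sub_lt (Nat.pos_of_ne_zero h) Nat.one_pos) (rho_le u)⟩)
      + (rho u - 1) * Mw w

def dChain {n : ℕ} (w : F → ℕ) (u v : Fin n → F) : ℕ := chainWeight w (u - v)

def ballW {n : ℕ} (w : F → ℕ) (x : Fin n → F) (r : ℕ) : Finset (Fin n → F) :=
  Finset.univ.filter fun v => dChain w x v ≤ r

def diamW {n : ℕ} (w : F → ℕ) (A : Finset (Fin n → F)) : ℕ :=
  (A ×ˢ A).sup fun p => dChain w p.1 p.2

def AstarW (w : F → ℕ) (n D : ℕ) : ℕ :=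
  Finset.univ.sup fun A : Finset (Fin n → F) => if diamW w A ≤ D then A.card else 0

def winv (w : F → ℕ) (S : ℕ) : Finset F :=
  Finset.univ.filter fun a => a ≠ 0 ∧ w a ≤ S

def dP {n : ℕ} (C : Finset (Fin n → F)) : ℕ :=
  sInf {s | ∃ x ∈ C, ∃ y ∈ C, x ≠ y ∧ rho (x - y) = s}

def dW {n : ℕ} (w : F → ℕ) (C : Finset (Fin n → F)) : ℕ :=
  sInf {s | ∃ x ∈ C, ∃ y ∈ C, x ≠ y ∧ dChain w x y = s}

def floorW (w : F → ℕ) (n D : ℕ) : ℕ :=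
  (Finset.univ.filter fun u : Fin n → F => chainWeight w u < D).sup (chainWeight w)

def nonArch (w : F → ℕ) : Prop := ∀ a b : F, w (a + b) ≤ max (w a) (w b)

def Sw (w : F → ℕ) : ℕ :=
  if nonArch w then Mw w
  else sInf {s | ∃ a b : F, max (w a) (w b) < w (a - b) ∧ max (w a) (w b) = s}

def WwCond (w : F → ℕ) (S : ℕ) (K : Finset F) : Prop :=
  (∀ a ∈ K, Sw w ≤ w a ∧ w a ≤ S) ∧
  (∀ a ∈ K, ∀ b : F, w b ≤ Sw w - 1 → w (a - b) ≤ S) ∧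
  (∀ a ∈ K, ∀ b ∈ K, w (a - b) ≤ S)

def WwCard (w : F → ℕ) (S : ℕ) : ℕ :=
  Finset.univ.sup fun K : Finset F => if WwCond w S K then K.card else 0

def idealOf {n : ℕ} (P : PartialOrder (Fin n)) (u : Fin n → F) : Finset (Fin n) :=
  Finset.univ.filter fun j => ∃ i : Fin n, u i ≠ 0 ∧ P.le j i

def maxOf {n : ℕ} (P : PartialOrder (Fin n)) (u : Fin n → F) : Finset (Fin n) :=
  (idealOf P u).filter fun j => ∀ k ∈ idealOf P u, P.le j k → j = k

def posetWeight {n : ℕ} (P : PartialOrder (Fin n)) (w : F → ℕ) (u : Fin n → F) : ℕ :=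
  (∑ i ∈ maxOf P u, w (u i)) + Mw w * ((idealOf P u) \ (maxOf P u)).card

def dPoset {n : ℕ} (P : PartialOrder (Fin n)) (w : F → ℕ) (u v : Fin n → F) : ℕ :=
  posetWeight P w (u - v)

def ballP {n : ℕ} (P : PartialOrder (Fin n)) (w : F → ℕ) (x : Fin n → F) (r : ℕ) :
    Finset (Fin n → F) :=
  Finset.univ.filter fun v => dPoset P w x v ≤ r

def diamP {n : ℕ} (P : PartialOrder (Fin n)) (w : F → ℕ) (A : Finset (Fin n → F)) : ℕ :=
  (A ×ˢ A).sup fun p => dPoset P w p.1 p.2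

end

section Aux

variable {F : Type*} [Field F] [Fintype F]

open scoped Classical

lemma rho_eq_zero_iff {n : ℕ} (u : Fin n → F) : rho u = 0 ↔ u = 0 := by
  constructor
  · intro h
    funext j
    rw [Pi.zero_apply]
    by_contra hj
    have : (j : ℕ) + 1 ≤ rho u := by
      unfold rho
      exact Finset.le_sup (f := fun j : Fin n => (j : ℕ) + 1) (by simp [hj])
    omega
  · intro h
    subst h
    unfold rho
    simp

lemma rho_spec {n : ℕ} (u : Fin n → F) (h : rho u ≠ 0) :
    u ⟨rho u - 1,
      lt_of_lt_of_le (Nat.sub_lt (Nat.pos_of_ne_zero h) Nat.one_pos) (rho_le u)⟩ ≠ 0 := by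
  have hne : (Finset.univ.filter fun j => u j ≠ 0).Nonempty := by
    by_contra hc
    rw [Finset.not_nonempty_iff_eq_empty] at hc
    apply h
    unfold rho
    rw [hc]
    simp
  obtain ⟨j, hj, hje⟩ := Finset.exists_mem_eq_sup _ hne (fun j => (j : ℕ) + 1)
  have hju : u j ≠ 0 := (Finset.mem_filter.mp hj).2
  have hr : rho u = (j : ℕ) + 1 := hje
  have : (⟨rho u - 1,
      lt_of_lt_of_le (Nat.sub_lt (Nat.pos_of_ne_zero h) Nat.one_pos) (rho_le u)⟩ : Fin n) = j := by
    apply Fin.ext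
    simp [hr]
  rw [this]
  exact hju

lemma Mw_eq (w : F → ℕ) (hw : IsWeight w) (lam : ℕ)
    (hwl : ∀ a : F, a ≠ 0 → w a = lam) : Mw w = lam := by
  apply le_antisymm
  · apply Finset.sup_le
    intro a _
    by_cases h : a = 0
    · simp [(hw.1 a).mpr h]
    · simp [hwl a h]
  · calc lam = w 1 := (hwl 1 one_ne_zero).symm
      _ ≤ Mw w := Finset.le_sup (Finset.mem_univ 1)

lemma chainWeight_eq (w : F → ℕ) (hw : IsWeight w) (lam : ℕ)
    (hwl : ∀ a : F, a ≠ 0 → w a = lam) {n : ℕ} (u : Fin n → F) :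
    chainWeight w u = lam * rho u := by
  unfold chainWeight
  by_cases h : rho u = 0
  · simp [h]
  · rw [dif_neg h]
    rw [hwl _ (rho_spec u h), Mw_eq w hw lam hwl]
    obtain ⟨m, hm⟩ : ∃ m, rho u = m + 1 := ⟨rho u - 1, by omega⟩
    rw [hm]
    simp only [Nat.add_sub_cancel]
    ring

lemma rho_le_iff {n : ℕ} (u : Fin n → F) (e : ℕ) :
    rho u ≤ e ↔ ∀ j : Fin n, e ≤ (j : ℕ) → u j = 0 := by
  unfold rho
  rw [Finset.sup_le_iff]
  constructor
  · intro h j hj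
    by_contra hc
    have := h j (by simp [hc])
    omega
  · intro h j hj
    rw [Finset.mem_filter] at hj
    by_contra hc
    exact hj.2 (h j (by omega))

lemma dP_spec {n : ℕ} (C : Finset (Fin n → F)) (hC : 2 ≤ C.card) :
    ∃ x ∈ C, ∃ y ∈ C, x ≠ y ∧ rho (x - y) = dP C := by
  obtain ⟨x, hx, y, hy, hxy⟩ := Finset.one_lt_card.mp hC
  have hne : {s | ∃ x ∈ C, ∃ y ∈ C, x ≠ y ∧ rho (x - y) = s}.Nonempty :=
    ⟨rho (x - y), x, hx, y, hy, hxy, rfl⟩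
  exact Nat.sInf_mem hne

lemma dW_eq (w : F → ℕ) (hw : IsWeight w) (lam : ℕ)
    (hwl : ∀ a : F, a ≠ 0 → w a = lam) {n : ℕ} (C : Finset (Fin n → F))
    (hC : 2 ≤ C.card) : dW w C = lam * dP C := by
  apply le_antisymm
  · obtain ⟨x, hx, y, hy, hxy, hd⟩ := dP_spec C hC
    apply Nat.sInf_le
    exact ⟨x, hx, y, hy, hxy, by rw [dChain, chainWeight_eq w hw lam hwl, hd]⟩
  · obtain ⟨x, hx, y, hy, hxy, hd⟩ :
        ∃ x ∈ C, ∃ y ∈ C, x ≠ y ∧ dChain w x y = dW w C := by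
      obtain ⟨x, hx, y, hy, hxy⟩ := Finset.one_lt_card.mp hC
      have hne : {s | ∃ x ∈ C, ∃ y ∈ C, x ≠ y ∧ dChain w x y = s}.Nonempty :=
        ⟨dChain w x y, x, hx, y, hy, hxy, rfl⟩
      exact Nat.sInf_mem hne
    have : dP C ≤ rho (x - y) := Nat.sInf_le ⟨x, hx, y, hy, hxy, rfl⟩
    calc lam * dP C ≤ lam * rho (x - y) := Nat.mul_le_mul_left lam this
      _ = dChain w x y := (by rw [dChain, chainWeight_eq w hw lam hwl])
      _ = dW w C := hd

lemma floorW_eq (w : F → ℕ) (hw : IsWeight w) (lam : ℕ) (hlam : 1 ≤ lam)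
    (hwl : ∀ a : F, a ≠ 0 → w a = lam) {n d : ℕ} (hd1 : 1 ≤ d) (hdn : d ≤ n) :
    floorW w n (lam * d) = lam * (d - 1) := by
  apply le_antisymm
  · apply Finset.sup_le
    intro u hu
    rw [Finset.mem_filter] at hu
    rw [chainWeight_eq w hw lam hwl] at hu ⊢
    have : rho u < d := lt_of_mul_lt_mul_left hu.2 (Nat.zero_le lam)
    exact Nat.mul_le_mul_left lam (by omega)
  · by_cases hd2 : d = 1
    · simp [hd2]
    · -- d ≥ 2; witness u supported at index d - 2
      have hlt : d - 2 < n := by omega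
      set u : Fin n → F := fun j => if (j : ℕ) = d - 2 then 1 else 0 with hu
      have hrho : rho u = d - 1 := by
        apply le_antisymm
        · apply Finset.sup_le
          intro j hj
          rw [Finset.mem_filter] at hj
          have : (j : ℕ) = d - 2 := by
            by_contra hc
            exact hj.2 (by simp [hu, hc])
          omega
        · have hmemf : (⟨d - 2, hlt⟩ : Fin n) ∈ Finset.univ.filter fun j => u j ≠ 0 := by
            simp [hu]
          have h2 := Finset.le_sup (f := fun j : Fin n => (j : ℕ) + 1) hmemf
          simp only [Fin.val_mk] at h2
          unfold rho
          exact le_trans (by omega) h2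
      have hmem : u ∈ Finset.univ.filter
          fun v : Fin n → F => chainWeight w v < lam * d := by
        rw [Finset.mem_filter, chainWeight_eq w hw lam hwl, hrho]
        refine ⟨Finset.mem_univ _, ?_⟩
        exact mul_lt_mul_of_pos_left (by omega) (by omega)
      calc lam * (d - 1) = chainWeight w u := by
            rw [chainWeight_eq w hw lam hwl, hrho]
        _ ≤ _ := Finset.le_sup hmem

lemma AstarW_eq (w : F → ℕ) (hw : IsWeight w) (lam : ℕ) (hlam : 1 ≤ lam)
    (hwl : ∀ a : F, a ≠ 0 → w a = lam) {n e : ℕ} (hen : e ≤ n) :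
    AstarW w n (lam * e) = Fintype.card F ^ e := by
  set S : Finset (Fin n → F) :=
    Finset.univ.filter fun u => ∀ j : Fin n, e ≤ (j : ℕ) → u j = 0 with hS
  have hScard : S.card = Fintype.card F ^ e := by
    rw [← Fintype.card_coe]
    have eqv : {u // u ∈ S} ≃ (Fin e → F) :=
      { toFun := fun u i => u.1 (Fin.castLE hen i)
        invFun := fun v => ⟨fun j => if h : (j : ℕ) < e then v ⟨j, h⟩ else 0, by
          simp only [hS, Finset.mem_filter, Finset.mem_univ, true_and]
          intro j hj
          rw [dif_neg (by omega)]⟩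
        left_inv := fun u => by
          apply Subtype.ext
          funext j
          dsimp only
          by_cases h : (j : ℕ) < e
          · rw [dif_pos h]
            congr 1
          · rw [dif_neg h]
            have := (Finset.mem_filter.mp u.2).2 j (by omega)
            exact this.symm
        right_inv := fun v => by
          funext i
          simp [Fin.coe_castLE] }
    rw [Fintype.card_congr eqv, Fintype.card_fun, Fintype.card_fin]
  rw [← hScard]
  apply le_antisymm
  · apply Finset.sup_le
    intro A _
    by_cases hA : diamW w A ≤ lam * e
    · rw [if_pos hA]
      -- truncation map is injective from A into S
      apply Finset.card_le_card_of_injOn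
        (fun (x : Fin n → F) (j : Fin n) => if (j : ℕ) < e then x j else 0)
      · intro x hxA
        simp only [hS, Finset.mem_coe, Finset.mem_filter, Finset.mem_univ, true_and]
        intro j hj
        rw [if_neg (by omega)]
      · intro x hx y hy hxy
        unfold diamW at hA
        have hd : dChain w x y ≤ lam * e := by
          have h0 := Finset.le_sup
            (f := fun p : (Fin n → F) × (Fin n → F) => dChain w p.1 p.2)
            (Finset.mk_mem_product hx hy)
          exact le_trans h0 hA
        rw [dChain, chainWeight_eq w hw lam hwl] at hd
        have hrho : rho (x - y) ≤ e := le_of_mul_le_mul_left hd (by omega)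
        rw [rho_le_iff] at hrho
        funext j
        by_cases h : (j : ℕ) < e
        · have := congrFun hxy j
          simpa [if_pos h] using this
        · have := hrho j (by omega)
          have hsub : x j - y j = 0 := this
          have : x j = y j := by
            have := sub_eq_zero.mp hsub
            exact this
          exact this
    · rw [if_neg hA]
      exact Nat.zero_le _
  · have hdiam : diamW w S ≤ lam * e := by
      apply Finset.sup_le
      intro p hp
      rw [Finset.mem_product] at hp
      rw [dChain, chainWeight_eq w hw lam hwl]
      apply Nat.mul_le_mul_left
      rw [rho_le_iff]
      intro j hj
      have h1 := (Finset.mem_filter.mp hp.1).2 j hj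
      have h2 := (Finset.mem_filter.mp hp.2).2 j hj
      simp [h1, h2]
    have hle := Finset.le_sup
      (f := fun A : Finset (Fin n → F) => if diamW w A ≤ lam * e then A.card else 0)
      (Finset.mem_univ S)
    rw [if_pos hdiam] at hle
    unfold AstarW
    exact hle

end Aux

theorem stmt10 {F : Type*} [Field F] [Fintype F] {n : ℕ} (hn : 1 ≤ n)
    (w : F → ℕ) (hw : IsWeight w) (lam : ℕ) (hlam : 1 ≤ lam)
    (hwl : ∀ a : F, a ≠ 0 → w a = lam)
    (C : Finset (Fin n → F)) (hC : 2 ≤ C.card) :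
    AstarW w n (floorW w n (dW w C)) * C.card = Fintype.card F ^ n ↔
      C.card = Fintype.card F ^ (n - dP C + 1) := by
  classical
  obtain ⟨x, hx, y, hy, hxy, hd⟩ := dP_spec C hC
  set d := dP C with hdd
  have hd1 : 1 ≤ d := by
    rw [← hd]
    have : x - y ≠ 0 := sub_ne_zero.mpr hxy
    have := (rho_eq_zero_iff (x - y)).not.mpr this
    omega
  have hdn : d ≤ n := hd ▸ rho_le (x - y)
  rw [dW_eq w hw lam hwl C hC, floorW_eq w hw lam hlam hwl hd1 hdn,
    AstarW_eq w hw lam hlam hwl (show d - 1 ≤ n by omega)]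
  have hq : 0 < Fintype.card F := Fintype.card_pos
  have hsplit : Fintype.card F ^ n =
      Fintype.card F ^ (d - 1) * Fintype.card F ^ (n - d + 1) := by
    rw [← pow_add]
    congr 1
    omega
  rw [hsplit]
  constructor
  · intro h
    exact Nat.eq_of_mul_eq_mul_left (Nat.pow_pos hq) h
  · intro h
    rw [h]
end

section
/- If C ⊆ 𝔽_q^n is an MDS code with |C| ≥ 2 and minimum distance d_w(C) = D, then A*_{d_w}(⌊D⌋_w) · |C| = q^n; in other words, every MDS code is diameter perfect. -/
set_option linter.unusedSectionVars false

open scoped Classical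

section Helpers

open scoped Classical

variable {F : Type*} [Field F] [Fintype F]

lemma le_rho' {n : ℕ} {u : Fin n → F} {j : Fin n} (h : u j ≠ 0) : (j : ℕ) + 1 ≤ rho u := by
  have hmem : j ∈ Finset.univ.filter fun i : Fin n => u i ≠ 0 := by simp [h]
  exact Finset.le_sup (f := fun j : Fin n => (j : ℕ) + 1) hmem

lemma rho_top {n : ℕ} {u : Fin n → F} (h : rho u ≠ 0) :
    ∃ j : Fin n, u j ≠ 0 ∧ (j : ℕ) + 1 = rho u := by
  have hne : (Finset.univ.filter fun j : Fin n => u j ≠ 0).Nonempty := by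
    by_contra hemp
    rw [Finset.not_nonempty_iff_eq_empty] at hemp
    simp [rho, hemp] at h
  obtain ⟨j, hj, hj2⟩ :=
    Finset.exists_mem_eq_sup (Finset.univ.filter fun j : Fin n => u j ≠ 0) hne
      (fun j : Fin n => (j : ℕ) + 1)
  exact ⟨j, (Finset.mem_filter.mp hj).2, hj2.symm⟩

lemma rho_ne_zero' {n : ℕ} {u : Fin n → F} (h : u ≠ 0) : rho u ≠ 0 := by
  obtain ⟨j, hj⟩ := Function.ne_iff.mp h
  have hj' : u j ≠ 0 := hj
  have := le_rho' hj'
  omega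

lemma chainWeight_of_top {n : ℕ} (w : F → ℕ) {u : Fin n → F} {k : ℕ} (hk : k < n)
    (h0 : u ⟨k, hk⟩ ≠ 0) (hhi : ∀ j : Fin n, k < (j : ℕ) → u j = 0) :
    rho u = k + 1 ∧ chainWeight w u = w (u ⟨k, hk⟩) + k * Mw w := by
  have h1 : rho u = k + 1 := by
    refine le_antisymm ?_ (le_rho' h0)
    refine Finset.sup_le ?_
    intro j hj
    rw [Finset.mem_filter] at hj
    by_contra hlt
    exact hj.2 (hhi j (by omega))
  refine ⟨h1, ?_⟩
  simp only [chainWeight, h1]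
  rw [dif_neg (Nat.succ_ne_zero k)]
  simp

lemma chainWeight_le_rho_mul {n : ℕ} (w : F → ℕ) (u : Fin n → F) :
    chainWeight w u ≤ rho u * Mw w := by
  unfold chainWeight
  split
  · simp
  · next h =>
    have h1 : w (u ⟨rho u - 1, lt_of_lt_of_le (Nat.sub_lt (Nat.pos_of_ne_zero h) Nat.one_pos)
        (rho_le u)⟩) ≤ Mw w := Finset.le_sup (Finset.mem_univ _)
    have h2 : Mw w + (rho u - 1) * Mw w = rho u * Mw w := by
      have hr : rho u - 1 + 1 = rho u := by omega
      calc Mw w + (rho u - 1) * Mw w = (rho u - 1 + 1) * Mw w := by ring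
        _ = rho u * Mw w := by rw [hr]
    omega

lemma chainWeight_ge {n : ℕ} (w : F → ℕ) {u : Fin n → F} (h : rho u ≠ 0) :
    mw w + (rho u - 1) * Mw w ≤ chainWeight w u := by
  obtain ⟨j, hj, hjr⟩ := rho_top h
  unfold chainWeight
  rw [dif_neg h]
  have key : ∀ hk : rho u - 1 < n, mw w ≤ w (u ⟨rho u - 1, hk⟩) := by
    intro hk
    have hje : (⟨rho u - 1, hk⟩ : Fin n) = j := Fin.ext (show rho u - 1 = (j : ℕ) by omega)
    rw [hje]
    exact Nat.sInf_le ⟨u j, hj, rfl⟩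
  exact Nat.add_le_add_right (key _) _

lemma mw_spec (w : F → ℕ) : ∃ a : F, a ≠ 0 ∧ w a = mw w :=
  Nat.sInf_mem (⟨w 1, 1, one_ne_zero, rfl⟩ : {s | ∃ a : F, a ≠ 0 ∧ w a = s}.Nonempty)

def equivLT {n k : ℕ} (hk : k ≤ n) : {j : Fin n // (j : ℕ) < k} ≃ Fin k where
  toFun x := ⟨x.1, x.2⟩
  invFun i := ⟨⟨i.1, lt_of_lt_of_le i.2 hk⟩, i.2⟩
  left_inv x := rfl
  right_inv i := rfl

def equivGE (n k : ℕ) : {j : Fin n // ¬ (j : ℕ) < k} ≃ Fin (n - k) where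
  toFun x := ⟨(x.1 : ℕ) - k, by have h1 := x.1.isLt; have h2 := x.2; omega⟩
  invFun i := ⟨⟨(i : ℕ) + k, by have := i.isLt; omega⟩, by simp⟩
  left_inv x := Subtype.ext (Fin.ext (by have := x.2; simp; omega))
  right_inv i := Fin.ext (by simp)

lemma card_fun_lt {n k : ℕ} (hk : k ≤ n) :
    Fintype.card ({j : Fin n // (j : ℕ) < k} → F) = Fintype.card F ^ k := by
  rw [Fintype.card_fun, Fintype.card_congr (equivLT hk), Fintype.card_fin]

lemma card_fun_ge (n k : ℕ) :
    Fintype.card ({j : Fin n // ¬ (j : ℕ) < k} → F) = Fintype.card F ^ (n - k) := by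
  rw [Fintype.card_fun, Fintype.card_congr (equivGE n k), Fintype.card_fin]

lemma card_A0 {n k : ℕ} (hk : k ≤ n) :
    (Finset.univ.filter fun u : Fin n → F => ∀ j : Fin n, k ≤ (j : ℕ) → u j = 0).card
      = Fintype.card F ^ k := by
  rw [← card_fun_lt (F := F) hk, ← Finset.card_univ]
  apply Finset.card_nbij' (fun u => fun j : {j : Fin n // (j : ℕ) < k} => u j.1)
      (fun t => fun i : Fin n => if h : (i : ℕ) < k then t ⟨i, h⟩ else 0)
  · intro u _; exact Finset.mem_univ _
  · intro t _
    simp only [Finset.mem_coe, Finset.mem_filter, Finset.mem_univ, true_and]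
    intro j hj
    rw [dif_neg (by omega)]
  · intro u hu
    funext i
    beta_reduce
    by_cases h : (i : ℕ) < k
    · rw [dif_pos h]
    · rw [dif_neg h]
      simp only [Finset.mem_coe, Finset.mem_filter] at hu
      exact (hu.2 i (by omega)).symm
  · intro t _
    funext j
    exact dif_pos j.2

end Helpers
set_option maxHeartbeats 1000000 in
theorem stmt11 {F : Type*} [Field F] [Fintype F] {n : ℕ} (hn : 1 ≤ n)
    (w : F → ℕ) (hw : IsWeight w) (C : Finset (Fin n → F)) (hC : 2 ≤ C.card)
    (hMDS : C.card = Fintype.card F ^ (n - dP C + 1)) :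
    AstarW w n (floorW w n (dW w C)) * C.card = Fintype.card F ^ n := by
  classical
  -- weight basics
  obtain ⟨a0, ha0, ha0m⟩ := mw_spec w
  have hm1 : 1 ≤ mw w := by
    have : w a0 ≠ 0 := fun h => ha0 ((hw.1 a0).mp h)
    omega
  have hmM : mw w ≤ Mw w := by
    have h1 : w a0 ≤ Mw w := Finset.le_sup (Finset.mem_univ a0)
    omega
  -- distance basics
  obtain ⟨x0, hx0, y0, hy0, hxy0⟩ := Finset.one_lt_card.mp (by omega : 1 < C.card)
  have hd_le : ∀ x ∈ C, ∀ y ∈ C, x ≠ y → dP C ≤ rho (x - y) := by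
    intro x hx y hy hxy
    exact Nat.sInf_le ⟨x, hx, y, hy, hxy, rfl⟩
  have hdn : dP C ≤ n := le_trans (hd_le x0 hx0 y0 hy0 hxy0) (rho_le _)
  have hd1 : 1 ≤ dP C := by
    obtain ⟨x1, hx1, y1, hy1, hxy1, hrho1⟩ :=
      Nat.sInf_mem (⟨_, x0, hx0, y0, hy0, hxy0, rfl⟩ :
        {s | ∃ x ∈ C, ∃ y ∈ C, x ≠ y ∧ rho (x - y) = s}.Nonempty)
    have h1 : rho (x1 - y1) ≠ 0 := rho_ne_zero' (sub_ne_zero_of_ne hxy1)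
    have h2 : rho (x1 - y1) = dP C := hrho1
    omega
  -- MDS surjectivity onto high coordinates
  have hinj : Set.InjOn
      (fun u : Fin n → F => fun j : {j : Fin n // ¬ (j : ℕ) < dP C - 1} => u j.1) ↑C := by
    intro x hx y hy hxy2
    by_contra hne
    have hrge := hd_le x (Finset.mem_coe.mp hx) y (Finset.mem_coe.mp hy) hne
    have hle : rho (x - y) ≤ dP C - 1 := by
      apply Finset.sup_le
      intro j hj
      rw [Finset.mem_filter] at hj
      by_contra hlt
      have hjT : ¬ (j : ℕ) < dP C - 1 := by omega
      have hxyj : x j = y j := congrFun hxy2 ⟨j, hjT⟩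
      exact hj.2 (by simp [hxyj])
    omega
  have hsurj : ∀ t : {j : Fin n // ¬ (j : ℕ) < dP C - 1} → F, ∃ x ∈ C,
      (fun j : {j : Fin n // ¬ (j : ℕ) < dP C - 1} => x j.1) = t := by
    intro t
    have himg : C.image (fun u : Fin n → F =>
        fun j : {j : Fin n // ¬ (j : ℕ) < dP C - 1} => u j.1) = Finset.univ := by
      apply Finset.eq_univ_of_card
      rw [Finset.card_image_of_injOn hinj, hMDS, card_fun_ge]
      congr 1
      omega
    have ht : t ∈ C.image (fun u : Fin n → F =>
        fun j : {j : Fin n // ¬ (j : ℕ) < dP C - 1} => u j.1) := himg ▸ Finset.mem_univ t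
    obtain ⟨x, hx, hxt⟩ := Finset.mem_image.mp ht
    exact ⟨x, hx, hxt⟩
  -- compute dW w C
  have hj0lt : dP C - 1 < n := by omega
  have hDW : dW w C = mw w + (dP C - 1) * Mw w := by
    have hj0T : ¬ ((⟨dP C - 1, hj0lt⟩ : Fin n) : ℕ) < dP C - 1 := by simp
    obtain ⟨x, hx, hxt⟩ :=
      hsurj (fun j => if (j.1 : ℕ) = dP C - 1 then x0 j.1 + a0 else x0 j.1)
    have hu0 : (x - x0) ⟨dP C - 1, hj0lt⟩ = a0 := by
      have h := congrFun hxt ⟨⟨dP C - 1, hj0lt⟩, hj0T⟩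
      simp only [if_pos rfl] at h
      simp [Pi.sub_apply, h]
    have hhi : ∀ j : Fin n, dP C - 1 < (j : ℕ) → (x - x0) j = 0 := by
      intro j hjgt
      have hjT : ¬ (j : ℕ) < dP C - 1 := by omega
      have h := congrFun hxt ⟨j, hjT⟩
      simp only at h
      rw [if_neg (by omega)] at h
      simp [Pi.sub_apply, h]
    have hch := chainWeight_of_top w hj0lt
      (show (x - x0) ⟨dP C - 1, hj0lt⟩ ≠ 0 by rw [hu0]; exact ha0) hhi
    have hxx0 : x ≠ x0 := by
      intro h
      apply ha0
      rw [← hu0, h, sub_self]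
      rfl
    have hmem : mw w + (dP C - 1) * Mw w ∈
        {s | ∃ x ∈ C, ∃ y ∈ C, x ≠ y ∧ dChain w x y = s} := by
      refine ⟨x, hx, x0, hx0, hxx0, ?_⟩
      show chainWeight w (x - x0) = mw w + (dP C - 1) * Mw w
      rw [hch.2, hu0, ha0m]
    apply le_antisymm (Nat.sInf_le hmem)
    obtain ⟨x2, hx2, y2, hy2, hxy2, hval⟩ := Nat.sInf_mem (⟨_, hmem⟩ :
        {s | ∃ x ∈ C, ∃ y ∈ C, x ≠ y ∧ dChain w x y = s}.Nonempty)
    have hrne : rho (x2 - y2) ≠ 0 := rho_ne_zero' (sub_ne_zero_of_ne hxy2)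
    have h1 := chainWeight_ge w (u := x2 - y2) hrne
    have h2 := hd_le x2 hx2 y2 hy2 hxy2
    have h3 : (dP C - 1) * Mw w ≤ (rho (x2 - y2) - 1) * Mw w :=
      Nat.mul_le_mul_right (Mw w) (by omega)
    have h4 : dChain w x2 y2 = chainWeight w (x2 - y2) := rfl
    have h5 : dChain w x2 y2 = dW w C := hval
    omega
  -- compute floorW
  have hfloor : floorW w n (mw w + (dP C - 1) * Mw w) = (dP C - 1) * Mw w := by
    apply le_antisymm
    · apply Finset.sup_le
      intro u hu
      rw [Finset.mem_filter] at hu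
      by_cases hr : rho u = 0
      · unfold chainWeight
        rw [dif_pos hr]
        exact Nat.zero_le _
      · have hlow := chainWeight_ge w hr
        have hhigh := chainWeight_le_rho_mul w u
        by_cases hk : rho u ≤ dP C - 1
        · have : rho u * Mw w ≤ (dP C - 1) * Mw w := Nat.mul_le_mul_right (Mw w) hk
          omega
        · have : (dP C - 1) * Mw w ≤ (rho u - 1) * Mw w :=
            Nat.mul_le_mul_right (Mw w) (by omega)
          have := hu.2
          omega
    · by_cases hd2 : dP C = 1
      · simp [hd2]
      · obtain ⟨b, -, hb⟩ := Finset.exists_mem_eq_sup Finset.univ Finset.univ_nonempty w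
        have hbM : w b = Mw w := hb.symm
        have hb0 : b ≠ 0 := by
          intro h
          rw [h, (hw.1 0).mpr rfl] at hbM
          omega
        have hk2 : dP C - 2 < n := by omega
        have hu10 : (if ((⟨dP C - 2, hk2⟩ : Fin n) : ℕ) = dP C - 2 then b else 0)
            = b := if_pos rfl
        have hch := chainWeight_of_top w (u := fun j : Fin n =>
            if (j : ℕ) = dP C - 2 then b else 0) hk2
          (show _ ≠ (0 : F) by rw [hu10]; exact hb0)
          (fun j hj => if_neg (by omega))
        have hcw : chainWeight w (fun j : Fin n => if (j : ℕ) = dP C - 2 then b else 0)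
            = (dP C - 1) * Mw w := by
          rw [hch.2, hu10, hbM]
          have he : dP C - 1 = (dP C - 2) + 1 := by omega
          rw [he, Nat.succ_mul]
          omega
        have hmem : (fun j : Fin n => if (j : ℕ) = dP C - 2 then b else 0) ∈
            Finset.univ.filter
            (fun u : Fin n → F => chainWeight w u < mw w + (dP C - 1) * Mw w) := by
          simp only [Finset.mem_filter, Finset.mem_univ, true_and, hcw]
          omega
        calc (dP C - 1) * Mw w
            = chainWeight w (fun j : Fin n => if (j : ℕ) = dP C - 2 then b else 0) :=
              hcw.symm
          _ ≤ _ := Finset.le_sup hmem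
  -- compute AstarW
  have hA : AstarW w n ((dP C - 1) * Mw w) = Fintype.card F ^ (dP C - 1) := by
    apply le_antisymm
    · apply Finset.sup_le
      intro A _
      split
      · next hdiam =>
        calc A.card
            ≤ (Finset.univ : Finset ({j : Fin n // (j : ℕ) < dP C - 1} → F)).card := ?_
          _ = Fintype.card F ^ (dP C - 1) := by
              rw [Finset.card_univ, card_fun_lt (by omega)]
        apply Finset.card_le_card_of_injOn
          (fun u => fun j : {j : Fin n // (j : ℕ) < dP C - 1} => u j.1)
          (fun _ _ => Finset.mem_univ _)
        intro x hx y hy hxy2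
        by_contra hne
        have hrne : rho (x - y) ≠ 0 := rho_ne_zero' (sub_ne_zero_of_ne hne)
        obtain ⟨j, hj, hjr⟩ := rho_top hrne
        have hjge : ¬ (j : ℕ) < dP C - 1 := by
          intro hjlt
          have hxyj : x j = y j := congrFun hxy2 ⟨j, hjlt⟩
          exact hj (by simp [hxyj])
        have h1 := chainWeight_ge w (u := x - y) hrne
        have h3 : (dP C - 1) * Mw w ≤ (rho (x - y) - 1) * Mw w :=
          Nat.mul_le_mul_right (Mw w) (by omega)
        have hmemp : (x, y) ∈ A ×ˢ A :=
          Finset.mem_product.mpr ⟨Finset.mem_coe.mp hx, Finset.mem_coe.mp hy⟩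
        have h4a : dChain w x y ≤ diamW w A := by
          have h := Finset.le_sup
            (f := fun p : (Fin n → F) × (Fin n → F) => dChain w p.1 p.2) hmemp
          exact h
        have h4 : dChain w x y ≤ (dP C - 1) * Mw w := le_trans h4a hdiam
        have h5 : dChain w x y = chainWeight w (x - y) := rfl
        omega
      · exact Nat.zero_le _
    · have hdn1 : dP C - 1 ≤ n := by omega
      have hcA0 := card_A0 (F := F) hdn1
      have hdiam0 : diamW w (Finset.univ.filter
          (fun u : Fin n → F => ∀ j : Fin n, dP C - 1 ≤ (j : ℕ) → u j = 0))
          ≤ (dP C - 1) * Mw w := by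
        apply Finset.sup_le
        intro p hp
        rw [Finset.mem_product] at hp
        have hp1 := (Finset.mem_filter.mp hp.1).2
        have hp2 := (Finset.mem_filter.mp hp.2).2
        have hrle : rho (p.1 - p.2) ≤ dP C - 1 := by
          apply Finset.sup_le
          intro j hj
          rw [Finset.mem_filter] at hj
          by_contra hlt
          have hjge : dP C - 1 ≤ (j : ℕ) := Nat.lt_succ_iff.mp (Nat.not_le.mp hlt)
          have e1 : p.1 j = 0 := hp1 j hjge
          have e2 : p.2 j = 0 := hp2 j hjge
          exact hj.2 (by simp [Pi.sub_apply, e1, e2])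
        calc dChain w p.1 p.2 ≤ rho (p.1 - p.2) * Mw w := chainWeight_le_rho_mul w _
          _ ≤ (dP C - 1) * Mw w := Nat.mul_le_mul_right (Mw w) hrle
      calc Fintype.card F ^ (dP C - 1)
          = (Finset.univ.filter
            (fun u : Fin n → F => ∀ j : Fin n, dP C - 1 ≤ (j : ℕ) → u j = 0)).card :=
            hcA0.symm
        _ = if diamW w (Finset.univ.filter
            (fun u : Fin n → F => ∀ j : Fin n, dP C - 1 ≤ (j : ℕ) → u j = 0))
            ≤ (dP C - 1) * Mw w then (Finset.univ.filter
            (fun u : Fin n → F => ∀ j : Fin n, dP C - 1 ≤ (j : ℕ) → u j = 0)).card else 0 :=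
            (if_pos hdiam0).symm
        _ ≤ AstarW w n ((dP C - 1) * Mw w) := by
            exact Finset.le_sup (f := fun A : Finset (Fin n → F) =>
              if diamW w A ≤ (dP C - 1) * Mw w then A.card else 0) (Finset.mem_univ _)
  rw [hDW, hfloor, hA, hMDS, ← pow_add]
  congr 1
  omega
end

section
/- Let D = S + R·M_w where 0 ≤ S < S_w, S = w(a) for some a ∈ 𝔽_q, R ≥ 0, and R + 1 ≤ n if S > 0 while R ≤ n if S = 0. Then: (1) diam_{d_w}(B_w(x, D)) = D for all x ∈ 𝔽_q^n; (2) B_w(x, D) is D-optimal for all x ∈ 𝔽_q^n; (3) every D-optimal set A equals B_w(x, D) for some x ∈ 𝔽_q^n; (4) B_w(0, D) is an 𝔽_q-linear subspace of 𝔽_q^n if and only if S = 0. Consequently, A*_{d_w}(D) = q^R if S = 0, and A*_{d_w}(D) = q^R · (1 + |w⁻¹([S]_w)|) if S > 0. -/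
set_option linter.unusedSectionVars false

open scoped Classical

section MyAux

variable {F : Type*} [Field F] [Fintype F] {n : ℕ}

lemma my_w_zero {w : F → ℕ} (hw : IsWeight w) : w 0 = 0 := (hw.1 0).2 rfl

lemma my_w_pos {w : F → ℕ} (hw : IsWeight w) {a : F} (ha : a ≠ 0) : 1 ≤ w a :=
  Nat.one_le_iff_ne_zero.2 fun h => ha ((hw.1 a).1 h)

lemma my_le_Mw (w : F → ℕ) (a : F) : w a ≤ Mw w := Finset.le_sup (Finset.mem_univ a)

lemma my_Mw_pos {w : F → ℕ} (hw : IsWeight w) : 1 ≤ Mw w :=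
  le_trans (my_w_pos hw one_ne_zero) (my_le_Mw w 1)

lemma my_Sw_le_Mw {w : F → ℕ} (hw : IsWeight w) : Sw w ≤ Mw w := by
  by_cases hna : nonArch w
  · rw [Sw, if_pos hna]
  · rw [Sw, if_neg hna]
    rw [nonArch] at hna
    push_neg at hna
    obtain ⟨a, b, hab⟩ := hna
    have h1 : max (w a) (w (-b)) < w (a - (-b)) := by
      rw [hw.2.1 b, sub_neg_eq_add]; omega
    exact le_trans (Nat.sInf_le ⟨a, -b, h1, rfl⟩)
      (max_le (my_le_Mw w a) (my_le_Mw w (-b)))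

lemma my_sub_le {w : F → ℕ} (hw : IsWeight w) {S : ℕ} (hS : S < Sw w)
    {a b : F} (ha : w a ≤ S) (hb : w b ≤ S) : w (a - b) ≤ S := by
  by_cases hna : nonArch w
  · have h := hna a (-b)
    rw [hw.2.1 b] at h
    rw [sub_eq_add_neg]
    omega
  · by_contra hcon
    push_neg at hcon
    have hmax : max (w a) (w b) < w (a - b) := lt_of_le_of_lt (max_le ha hb) hcon
    have h2 : Sw w ≤ max (w a) (w b) := by
      rw [Sw, if_neg hna]; exact Nat.sInf_le ⟨a, b, hmax, rfl⟩
    have := max_le ha hb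
    omega

lemma my_apply_eq_zero {u : Fin n → F} {j : Fin n} (h : rho u ≤ (j : ℕ)) : u j = 0 := by
  by_contra hj
  have : (j : ℕ) + 1 ≤ rho u :=
    Finset.le_sup (f := fun j : Fin n => (j : ℕ) + 1)
      (Finset.mem_filter.2 ⟨Finset.mem_univ j, hj⟩)
  omega

lemma my_rho_zero : rho (0 : Fin n → F) = 0 := by
  simp [rho]

lemma my_chainWeight_of_rho_zero {w : F → ℕ} {u : Fin n → F} (h : rho u = 0) :
    chainWeight w u = 0 := by
  rw [chainWeight, dif_pos h]

lemma my_chainWeight_zero (w : F → ℕ) : chainWeight w (0 : Fin n → F) = 0 :=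
  my_chainWeight_of_rho_zero my_rho_zero

lemma my_rho_spec {u : Fin n → F} (h : rho u ≠ 0) :
    ∃ j : Fin n, u j ≠ 0 ∧ (j : ℕ) + 1 = rho u ∧
      ∀ k : Fin n, (j : ℕ) < (k : ℕ) → u k = 0 := by
  have hne : (Finset.univ.filter fun j : Fin n => u j ≠ 0).Nonempty := by
    rw [Finset.filter_nonempty_iff]
    by_contra hc
    push_neg at hc
    apply h
    rw [rho, Finset.filter_false_of_mem, Finset.sup_empty]
    · rfl
    · intro j hj
      simpa using hc j (Finset.mem_univ j)
  obtain ⟨j, hjmem, hj⟩ := Finset.exists_mem_eq_sup _ hne fun j : Fin n => (j : ℕ) + 1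
  have hr : rho u = (j : ℕ) + 1 := hj
  refine ⟨j, (Finset.mem_filter.1 hjmem).2, hr.symm, fun k hk => ?_⟩
  exact my_apply_eq_zero (by omega)

lemma my_chainWeight_eq {w : F → ℕ} {u : Fin n → F} {j : Fin n} (hj : u j ≠ 0)
    (htop : ∀ k : Fin n, (j : ℕ) < (k : ℕ) → u k = 0) :
    chainWeight w u = w (u j) + (j : ℕ) * Mw w := by
  have h1 : rho u = (j : ℕ) + 1 := by
    refine le_antisymm (Finset.sup_le ?_)
      (Finset.le_sup (f := fun j : Fin n => (j : ℕ) + 1)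
        (Finset.mem_filter.2 ⟨Finset.mem_univ j, hj⟩))
    intro k hk
    rcases Finset.mem_filter.1 hk with ⟨-, hk⟩
    by_contra hlt
    exact hk (htop k (by omega))
  have h0 : rho u ≠ 0 := by omega
  rw [chainWeight, dif_neg h0]
  have h2 : ∀ pf : rho u - 1 < n, u ⟨rho u - 1, pf⟩ = u j := by
    intro pf
    congr 1
    exact Fin.ext (by simp [h1])
  rw [h2, h1]
  simp

lemma my_chainWeight_neg {w : F → ℕ} (hw : IsWeight w) (u : Fin n → F) :
    chainWeight w (-u) = chainWeight w u := by
  by_cases h : rho u = 0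
  · have h2 : rho (-u) = 0 := by
      have : (-u : Fin n → F) = 0 := by
        funext j
        simp [my_apply_eq_zero (u := u) (j := j) (by omega)]
      rw [this, my_rho_zero]
    rw [my_chainWeight_of_rho_zero h, my_chainWeight_of_rho_zero h2]
  · obtain ⟨j, hj, hjr, htop⟩ := my_rho_spec h
    rw [my_chainWeight_eq (u := u) hj htop,
      my_chainWeight_eq (u := -u) (j := j) (by simpa using hj)
        (fun k hk => by simp [htop k hk])]
    simp [hw.2.1]

/-- membership condition for the ball of radius `S + R * Mw w`. -/
def myInU (w : F → ℕ) (S R : ℕ) (u : Fin n → F) : Prop :=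
  (∀ j : Fin n, R < (j : ℕ) → u j = 0) ∧ (∀ j : Fin n, (j : ℕ) = R → w (u j) ≤ S)

lemma my_chain_le_iff {w : F → ℕ} (hw : IsWeight w) {S R : ℕ} (hSM : S ≤ Mw w)
    {u : Fin n → F} : chainWeight w u ≤ S + R * Mw w ↔ myInU w S R u := by
  by_cases h0 : rho u = 0
  · have hu : ∀ j : Fin n, u j = 0 := fun j => my_apply_eq_zero (by omega)
    rw [my_chainWeight_of_rho_zero h0]
    constructor
    · intro _
      exact ⟨fun j _ => hu j, fun j _ => by rw [hu j, my_w_zero hw]; omega⟩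
    · intro _
      omega
  · obtain ⟨j, hj, hjr, htop⟩ := my_rho_spec h0
    rw [my_chainWeight_eq hj htop]
    have hM1 : 1 ≤ Mw w := my_Mw_pos hw
    have hw1 : 1 ≤ w (u j) := my_w_pos hw hj
    have hwM : w (u j) ≤ Mw w := my_le_Mw w (u j)
    constructor
    · intro hle
      have hjR : (j : ℕ) ≤ R := by
        by_contra hgt
        push_neg at hgt
        have : (R + 1) * Mw w ≤ (j : ℕ) * Mw w := Nat.mul_le_mul_right _ (by omega)
        rw [add_mul, one_mul] at this
        omega
      constructor
      · intro k hk
        exact htop k (by omega)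
      · intro k hk
        rcases eq_or_lt_of_le hjR with heq | hlt
        · have : k = j := Fin.ext (by omega)
          rw [this]
          have : (j : ℕ) * Mw w = R * Mw w := by rw [heq]
          omega
        · rw [htop k (by omega), my_w_zero hw]
          omega
    · rintro ⟨h1, h2⟩
      have hjR : (j : ℕ) ≤ R := by
        by_contra hgt
        push_neg at hgt
        exact hj (h1 j hgt)
      rcases eq_or_lt_of_le hjR with heq | hlt
      · have := h2 j heq
        have : (j : ℕ) * Mw w = R * Mw w := by rw [heq]
        omega
      · have : ((j : ℕ) + 1) * Mw w ≤ R * Mw w := Nat.mul_le_mul_right _ (by omega)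
        rw [add_mul, one_mul] at this
        omega

lemma my_mem_ballW {w : F → ℕ} {x v : Fin n → F} {r : ℕ} :
    v ∈ ballW w x r ↔ chainWeight w (x - v) ≤ r := by
  exact ⟨fun h => (Finset.mem_filter.1 h).2, fun h => Finset.mem_filter.2 ⟨Finset.mem_univ _, h⟩⟩

lemma my_inU_sub {w : F → ℕ} (hw : IsWeight w) {S R : ℕ} (hS : S < Sw w)
    {u u' : Fin n → F} (h1 : myInU w S R u) (h2 : myInU w S R u') :
    myInU w S R (u - u') :=
  ⟨fun j hj => by simp [Pi.sub_apply, h1.1 j hj, h2.1 j hj],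
   fun j hj => my_sub_le hw hS (h1.2 j hj) (h2.2 j hj)⟩

lemma my_winv_zero {w : F → ℕ} (hw : IsWeight w) : winv w 0 = ∅ := by
  ext a
  simp only [winv, Finset.mem_filter, Finset.mem_univ, true_and, Finset.notMem_empty,
    iff_false, not_and]
  intro ha hle
  exact ha ((hw.1 a).1 (by omega))

lemma my_mem_W0 {w : F → ℕ} (hw : IsWeight w) {S : ℕ} {a : F} :
    a ∈ insert (0 : F) (winv w S) ↔ w a ≤ S := by
  simp only [Finset.mem_insert, winv, Finset.mem_filter, Finset.mem_univ, true_and]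
  constructor
  · rintro (rfl | ⟨-, h⟩)
    · rw [my_w_zero hw]; omega
    · exact h
  · intro h
    by_cases ha : a = 0
    · exact Or.inl ha
    · exact Or.inr ⟨ha, h⟩

lemma my_W0_card {w : F → ℕ} {S : ℕ} :
    (insert (0 : F) (winv w S)).card = 1 + (winv w S).card := by
  rw [Finset.card_insert_of_notMem (by simp [winv])]
  omega

end MyAux

section MyAux2

variable {F : Type*} [Field F] [Fintype F] {n : ℕ}

def mySv (j : Fin n) (a : F) : Fin n → F := fun k => if k = j then a else 0

lemma mySv_self {j : Fin n} {a : F} : mySv j a j = a := if_pos rfl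

lemma mySv_ne {j k : Fin n} {a : F} (h : k ≠ j) : mySv j a k = 0 := if_neg h

lemma my_chainWeight_sv {w : F → ℕ} {j : Fin n} {a : F} (ha : a ≠ 0) :
    chainWeight w (mySv j a) = w a + (j : ℕ) * Mw w := by
  have h := my_chainWeight_eq (w := w) (u := mySv j a) (j := j)
    (by rw [mySv_self]; exact ha)
    (fun k hk => mySv_ne (fun h => absurd (congrArg Fin.val h) (by omega)))
  rwa [mySv_self] at h

lemma my_inU_sv {w : F → ℕ} {S R : ℕ} {j : Fin n} (hjR : (j : ℕ) = R) {a : F}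
    (hwa : w a ≤ S) : myInU w S R (mySv j a) := by
  refine ⟨fun k hk => mySv_ne (fun h => ?_), fun k hk => ?_⟩
  · have := congrArg Fin.val h
    omega
  · have : k = j := Fin.ext (by omega)
    rw [this, mySv_self]
    exact hwa

lemma my_chainWeight_le_rho {w : F → ℕ} (u : Fin n → F) :
    chainWeight w u ≤ rho u * Mw w := by
  by_cases h : rho u = 0
  · rw [my_chainWeight_of_rho_zero h]
    omega
  · obtain ⟨j, hj, hjr, htop⟩ := my_rho_spec h
    rw [my_chainWeight_eq hj htop, ← hjr]
    have h1 : w (u j) ≤ Mw w := my_le_Mw w (u j)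
    have h2 : ((j : ℕ) + 1) * Mw w = (j : ℕ) * Mw w + 1 * Mw w := add_mul _ _ _
    omega

lemma my_ball_univ {w : F → ℕ} {S R : ℕ} (hRn : n ≤ R) (x : Fin n → F) :
    ballW w x (S + R * Mw w) = Finset.univ := by
  ext v
  simp only [Finset.mem_univ, iff_true]
  rw [my_mem_ballW]
  have h1 := my_chainWeight_le_rho (w := w) (x - v)
  have h2 : rho (x - v) * Mw w ≤ R * Mw w :=
    Nat.mul_le_mul_right _ (le_trans (rho_le _) hRn)
  omega

def myE (F : Type*) [Field F] (n R : ℕ) (p : (Fin R → F) × F) : Fin n → F := fun j =>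
  if h : (j : ℕ) < R then p.1 ⟨j, h⟩ else if (j : ℕ) = R then p.2 else 0

lemma myE_lt {R : ℕ} {p : (Fin R → F) × F} {j : Fin n} (h : (j : ℕ) < R) :
    myE F n R p j = p.1 ⟨j, h⟩ := dif_pos h

lemma myE_eq {R : ℕ} {p : (Fin R → F) × F} {j : Fin n} (h : (j : ℕ) = R) :
    myE F n R p j = p.2 := by
  rw [myE, dif_neg (by omega), if_pos h]

lemma myE_gt {R : ℕ} {p : (Fin R → F) × F} {j : Fin n} (h : R < (j : ℕ)) :
    myE F n R p j = 0 := by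
  rw [myE, dif_neg (by omega), if_neg (by omega)]

lemma myE_inj {R : ℕ} (hRn : R < n) : Function.Injective (myE F n R) := by
  intro p q h
  have h1 : p.1 = q.1 := by
    funext i
    have hi : (i : ℕ) < n := lt_trans i.isLt hRn
    have h2 := congrFun h ⟨i, hi⟩
    rw [myE_lt (by simpa using i.isLt), myE_lt (by simpa using i.isLt)] at h2
    simpa using h2
  have h2 : p.2 = q.2 := by
    have h3 := congrFun h ⟨R, hRn⟩
    rwa [myE_eq (R := R) rfl, myE_eq (R := R) rfl] at h3
  exact Prod.ext h1 h2

lemma my_ball_card {w : F → ℕ} (hw : IsWeight w) {S R : ℕ} (hSM : S ≤ Mw w)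
    (hRn : R < n) (x : Fin n → F) :
    (ballW w x (S + R * Mw w)).card = Fintype.card F ^ R * (1 + (winv w S).card) := by
  classical
  have hball : ballW w x (S + R * Mw w) =
      (Finset.univ ×ˢ insert (0 : F) (winv w S)).image (fun p => x - myE F n R p) := by
    ext v
    rw [my_mem_ballW, my_chain_le_iff hw hSM, Finset.mem_image]
    constructor
    · intro hv
      refine ⟨⟨fun i => (x - v) ⟨i, lt_trans i.isLt hRn⟩, (x - v) ⟨R, hRn⟩⟩,
        Finset.mem_product.2 ⟨Finset.mem_univ _, (my_mem_W0 hw).2 (hv.2 ⟨R, hRn⟩ rfl)⟩, ?_⟩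
      have he : myE F n R ⟨fun i => (x - v) ⟨i, lt_trans i.isLt hRn⟩, (x - v) ⟨R, hRn⟩⟩
          = x - v := by
        funext j
        rcases lt_trichotomy ((j : ℕ)) R with hlt | heq | hgt
        · rw [myE_lt hlt]
        · rw [myE_eq heq]
          have hje : j = (⟨R, hRn⟩ : Fin n) := Fin.ext heq
          rw [hje]
        · rw [myE_gt hgt, hv.1 j hgt]
      rw [he]
      abel
    · rintro ⟨p, hp, rfl⟩
      have he : x - (x - myE F n R p) = myE F n R p := sub_sub_cancel _ _
      rw [he]
      refine ⟨fun j hj => myE_gt hj, fun j hj => ?_⟩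
      rw [myE_eq hj]
      exact (my_mem_W0 hw).1 (Finset.mem_product.1 hp).2
  rw [hball, Finset.card_image_of_injective _
    (fun p q hpq => myE_inj hRn (by
      have : x - (x - myE F n R p) = x - (x - myE F n R q) := by rw [hpq]
      rwa [sub_sub_cancel, sub_sub_cancel] at this)),
    Finset.card_product, Finset.card_univ, my_W0_card]
  congr 1
  rw [Fintype.card_fun, Fintype.card_fin]

def myV (F : Type*) [Field F] (n R : ℕ) : Submodule F (Fin n → F) where
  carrier := {v | ∀ j : Fin n, R ≤ (j : ℕ) → v j = 0}
  add_mem' := fun {a b} ha hb j hj => by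
    simp only [Pi.add_apply, ha j hj, hb j hj, add_zero]
  zero_mem' := fun j _ => rfl
  smul_mem' := fun c v hv j hj => by
    simp only [Pi.smul_apply, hv j hj, smul_zero]

lemma my_mem_myV {R : ℕ} {v : Fin n → F} :
    v ∈ myV F n R ↔ ∀ j : Fin n, R ≤ (j : ℕ) → v j = 0 := Iff.rfl

end MyAux2

theorem stmt13 {F : Type*} [Field F] [Fintype F] {n : ℕ} (hn : 1 ≤ n)
    (w : F → ℕ) (hw : IsWeight w) (S R : ℕ)
    (hSval : ∃ a : F, w a = S) (hS : S < Sw w)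
    (hR1 : 0 < S → R + 1 ≤ n) (hR0 : S = 0 → R ≤ n) :
    (∀ x : Fin n → F, diamW w (ballW w x (S + R * Mw w)) = S + R * Mw w) ∧
    (∀ x : Fin n → F, diamW w (ballW w x (S + R * Mw w)) ≤ S + R * Mw w ∧
        (ballW w x (S + R * Mw w)).card = AstarW w n (S + R * Mw w)) ∧
    (∀ A : Finset (Fin n → F), diamW w A ≤ S + R * Mw w →
        A.card = AstarW w n (S + R * Mw w) →
        ∃ x : Fin n → F, A = ballW w x (S + R * Mw w)) ∧
    ((∃ V : Submodule F (Fin n → F),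
        ((ballW w (0 : Fin n → F) (S + R * Mw w) : Finset (Fin n → F)) : Set (Fin n → F)) =
          (V : Set (Fin n → F))) ↔ S = 0) ∧
    (S = 0 → AstarW w n (S + R * Mw w) = Fintype.card F ^ R) ∧
    (0 < S → AstarW w n (S + R * Mw w) =
        Fintype.card F ^ R * (1 + (winv w S).card)) := by
  classical
  obtain ⟨a0, ha0⟩ := hSval
  have hSM : S ≤ Mw w := ha0 ▸ my_le_Mw w a0
  have hM1 : 1 ≤ Mw w := my_Mw_pos hw
  set D := S + R * Mw w with hDdef
  -- cardinality of every ball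
  have hcard : ∀ x : Fin n → F,
      (ballW w x D).card = Fintype.card F ^ R * (1 + (winv w S).card) := by
    intro x
    rcases lt_or_ge R n with hRn | hRn
    · exact my_ball_card hw hSM hRn x
    · have hS0 : S = 0 := by
        by_contra h
        have := hR1 (Nat.pos_of_ne_zero h)
        omega
      have hRn' : R = n := le_antisymm (hR0 hS0) hRn
      rw [hDdef, my_ball_univ hRn x, hS0, my_winv_zero hw, hRn']
      rw [Finset.card_univ, Fintype.card_fun, Fintype.card_fin]
      simp
  have hmemself : ∀ x : Fin n → F, x ∈ ballW w x D := by
    intro x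
    rw [my_mem_ballW, sub_self, my_chainWeight_zero]
    omega
  have hdiam_le : ∀ x : Fin n → F, diamW w (ballW w x D) ≤ D := by
    intro x
    refine Finset.sup_le ?_
    rintro ⟨u, v⟩ hp
    rw [Finset.mem_product] at hp
    have h1 := (my_chain_le_iff hw hSM).1 (my_mem_ballW.1 hp.1)
    have h2 := (my_chain_le_iff hw hSM).1 (my_mem_ballW.1 hp.2)
    show chainWeight w (u - v) ≤ D
    have heq : u - v = (x - v) - (x - u) := by abel
    rw [heq]
    exact (my_chain_le_iff hw hSM).2 (my_inU_sub hw hS h2 h1)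
  have hle_diam : ∀ (A : Finset (Fin n → F)) (x y : Fin n → F), x ∈ A → y ∈ A →
      dChain w x y ≤ diamW w A := by
    intro A x y hx hy
    unfold diamW
    exact Finset.le_sup (f := fun p : (Fin n → F) × (Fin n → F) => dChain w p.1 p.2)
      (b := (x, y)) (Finset.mem_product.2 ⟨hx, hy⟩)
  have hAstar : AstarW w n D = Fintype.card F ^ R * (1 + (winv w S).card) := by
    apply le_antisymm
    · refine Finset.sup_le fun A _ => ?_
      split_ifs with hA
      · rcases A.eq_empty_or_nonempty with rfl | ⟨x, hx⟩
        · simp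
        · refine le_trans (Finset.card_le_card fun y hy => ?_) (le_of_eq (hcard x))
          rw [my_mem_ballW]
          exact le_trans (hle_diam A x y hx hy) hA
      · exact Nat.zero_le _
    · calc Fintype.card F ^ R * (1 + (winv w S).card)
          = (ballW w (0 : Fin n → F) D).card := (hcard 0).symm
        _ = if diamW w (ballW w (0 : Fin n → F) D) ≤ D
              then (ballW w (0 : Fin n → F) D).card else 0 := (if_pos (hdiam_le 0)).symm
        _ ≤ AstarW w n D := by
              unfold AstarW
              exact Finset.le_sup
                (f := fun A : Finset (Fin n → F) => if diamW w A ≤ D then A.card else 0)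
                (Finset.mem_univ _)
  have hdiam_ge : ∀ x : Fin n → F, D ≤ diamW w (ballW w x D) := by
    intro x
    rcases Nat.eq_zero_or_pos D with hD0 | hDpos
    · omega
    · obtain ⟨u0, hu0U, hu0C⟩ : ∃ u0 : Fin n → F, myInU w S R u0 ∧ chainWeight w u0 = D := by
        rcases Nat.eq_zero_or_pos S with hS0 | hSpos
        · have hR : 1 ≤ R := by
            rcases Nat.eq_zero_or_pos R with h | h
            · rw [hDdef, hS0, h] at hDpos
              simp at hDpos
            · exact h
          have hRn : R ≤ n := hR0 hS0
          obtain ⟨b, -, hb⟩ :=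
            Finset.exists_mem_eq_sup Finset.univ Finset.univ_nonempty w
          have hbM : Mw w = w b := hb
          have hbne : b ≠ 0 := by
            intro h
            rw [h, my_w_zero hw] at hbM
            omega
          refine ⟨mySv ⟨R - 1, by omega⟩ b, ⟨fun k hk => mySv_ne ?_, fun k hk => ?_⟩, ?_⟩
          · intro h
            have := congrArg Fin.val h
            simp at this
            omega
          · rw [mySv_ne (by intro h; have := congrArg Fin.val h; simp at this; omega),
              my_w_zero hw]
            omega
          · rw [my_chainWeight_sv hbne, ← hbM]
            have h2 : (R - 1 + 1) * Mw w = (R - 1) * Mw w + 1 * Mw w := add_mul _ _ _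
            have h3 : R - 1 + 1 = R := by omega
            rw [h3] at h2
            rw [hDdef, hS0]
            simp only [Fin.val_mk]
            omega
        · have hRn : R + 1 ≤ n := hR1 hSpos
          have ha0ne : a0 ≠ 0 := by
            intro h
            rw [h, my_w_zero hw] at ha0
            omega
          refine ⟨mySv ⟨R, by omega⟩ a0, my_inU_sv (j := ⟨R, by omega⟩) rfl (le_of_eq ha0), ?_⟩
          rw [my_chainWeight_sv ha0ne, ha0]
      have hv : x - u0 ∈ ballW w x D := by
        rw [my_mem_ballW, sub_sub_cancel]
        exact le_of_eq hu0C
      have hd : dChain w x (x - u0) = D := by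
        show chainWeight w (x - (x - u0)) = D
        rw [sub_sub_cancel]
        exact hu0C
      calc D = dChain w x (x - u0) := hd.symm
        _ ≤ _ := hle_diam _ _ _ (hmemself x) hv
  refine ⟨fun x => le_antisymm (hdiam_le x) (hdiam_ge x),
    fun x => ⟨hdiam_le x, by rw [hcard x, hAstar]⟩, ?_, ?_, ?_, ?_⟩
  · -- uniqueness
    intro A hA hAc
    have hNpos : 0 < AstarW w n D := by
      rw [hAstar]
      have h1 : 0 < Fintype.card F ^ R := pow_pos Fintype.card_pos R
      exact Nat.mul_pos h1 (by omega)
    have hAne : A.Nonempty := Finset.card_pos.1 (by omega)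
    obtain ⟨x, hx⟩ := hAne
    refine ⟨x, Finset.eq_of_subset_of_card_le (fun y hy => ?_) ?_⟩
    · rw [my_mem_ballW]
      exact le_trans (hle_diam A x y hx hy) hA
    · rw [hcard x, ← hAstar, hAc]
  · -- submodule iff
    constructor
    · rintro ⟨V, hV⟩
      by_contra hSne
      have hSpos : 0 < S := Nat.pos_of_ne_zero hSne
      have hRn : R + 1 ≤ n := hR1 hSpos
      have ha0ne : a0 ≠ 0 := by
        intro h
        rw [h, my_w_zero hw] at ha0
        omega
      have hmem : ∀ c : F, mySv (⟨R, by omega⟩ : Fin n) c ∈ ballW w (0 : Fin n → F) D →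
          w c ≤ S := by
        intro c hc
        rw [my_mem_ballW, zero_sub, my_chainWeight_neg hw, my_chain_le_iff hw hSM] at hc
        have := hc.2 ⟨R, by omega⟩ rfl
        rwa [mySv_self] at this
      have hu : mySv (⟨R, by omega⟩ : Fin n) a0 ∈ ballW w (0 : Fin n → F) D := by
        rw [my_mem_ballW, zero_sub, my_chainWeight_neg hw, my_chain_le_iff hw hSM]
        exact my_inU_sv (j := ⟨R, by omega⟩) rfl (le_of_eq ha0)
      have huV : mySv (⟨R, by omega⟩ : Fin n) a0 ∈ V := by
        rw [← SetLike.mem_coe, ← hV]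
        exact Finset.mem_coe.2 hu
      have hall : ∀ b : F, w b ≤ S := by
        intro b
        have hsm : (b * a0⁻¹) • mySv (⟨R, by omega⟩ : Fin n) a0 ∈ V := V.smul_mem _ huV
        have heq : (b * a0⁻¹) • mySv (⟨R, by omega⟩ : Fin n) a0
            = mySv (⟨R, by omega⟩ : Fin n) b := by
          funext k
          by_cases hk : k = (⟨R, by omega⟩ : Fin n)
          · subst hk
            rw [Pi.smul_apply, mySv_self, mySv_self, smul_eq_mul, mul_assoc,
              inv_mul_cancel₀ ha0ne, mul_one]
          · rw [Pi.smul_apply, mySv_ne hk, mySv_ne hk, smul_zero]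
        rw [heq] at hsm
        apply hmem b
        rw [← Finset.mem_coe, hV]
        exact hsm
      have hMS : Mw w ≤ S := Finset.sup_le fun b _ => hall b
      have := my_Sw_le_Mw hw
      omega
    · intro hS0
      refine ⟨myV F n R, Set.ext fun v => ?_⟩
      rw [Finset.mem_coe, my_mem_ballW, zero_sub, my_chainWeight_neg hw,
        my_chain_le_iff hw hSM, SetLike.mem_coe, my_mem_myV]
      constructor
      · rintro ⟨h1, h2⟩ k hk
        rcases eq_or_lt_of_le hk with heq | hlt
        · have h3 := h2 k heq.symm
          rw [hS0] at h3
          exact (hw.1 (v k)).1 (by omega)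
        · exact h1 k hlt
      · intro h
        refine ⟨fun k hk => h k (le_of_lt hk), fun k hk => ?_⟩
        rw [h k (le_of_eq hk.symm), my_w_zero hw]
        omega
  · intro hS0
    rw [hAstar, hS0, my_winv_zero hw]
    simp
  · intro _
    exact hAstar
end
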